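/- Let G be a locally compact group which is unitarisable. If G has Kazhdan's Property (T) (that is, Property (T)_1), then G has Property (T)_c for every c ≥ 1. -/

import Mathlib

open scoped ENNReal
open MeasureTheory

structure HilbRep (G : Type*) [Group G] [TopologicalSpace G] where
  (space : Type*)
  [normedAddCommGroup : NormedAddCommGroup space]
  [innerProductSpace : InnerProductSpace ℂ space]
  [completeSpace : CompleteSpace space]
  toFun : G →* (space →L[ℂ] space)ˣ

attribute [instance] HilbRep.normedAddCommGroup HilbRep.innerProductSpace HilbRep.completeSpace

namespace HilbRep

variable {G : Type*} [Group G] [TopologicalSpace G]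

/-- The bounded invertible operator associated to a group element. -/
def op (π : HilbRep G) (s : G) : π.space →L[ℂ] π.space :=
  (π.toFun s : π.space →L[ℂ] π.space)

/-- The representation is uniformly bounded by `c`. -/
def IsUB (π : HilbRep G) (c : ℝ) : Prop := ∀ s : G, ‖π.op s‖ ≤ c

/-- The representation is continuous for the strong operator topology. -/
def IsSOTContinuous (π : HilbRep G) : Prop :=
  ∀ ξ : π.space, Continuous fun s : G => π.op s ξ

/-- `π ∈ R_c(G)`: strongly continuous and uniformly bounded by `c`. -/
def IsRc (π : HilbRep G) (c : ℝ) : Prop := π.IsUB c ∧ π.IsSOTContinuous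

/-- `π` almost has invariant vectors. -/
def AlmostInvariantVectors (π : HilbRep G) : Prop :=
  ∀ Q : Set G, IsCompact Q → ∀ ε : ℝ, 0 < ε →
    ∃ ξ : π.space, ∀ s ∈ Q, ‖π.op s ξ - ξ‖ < ε * ‖ξ‖

/-- `π` has a nonzero invariant vector. -/
def HasInvariantVector (π : HilbRep G) : Prop :=
  ∃ ξ : π.space, ξ ≠ 0 ∧ ∀ s : G, π.op s ξ = ξ

end HilbRep

universe u v

/-- Property (T)_c. -/
def HasPropertyT (G : Type u) [Group G] [TopologicalSpace G] (c : ℝ) : Prop :=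
  ∀ π : HilbRep.{u, v} G, π.IsRc c → π.AlmostInvariantVectors → π.HasInvariantVector

/-- `G` is unitarisable: every strongly continuous uniformly bounded representation is
conjugate, by a bounded invertible operator, to a unitary representation. -/
def Unitarisable (G : Type u) [Group G] [TopologicalSpace G] : Prop :=
  ∀ π : HilbRep.{u, v} G, π.IsSOTContinuous → (∃ c : ℝ, π.IsUB c) →
    ∃ S : π.space ≃L[ℂ] π.space, ∀ (s : G) (ξ : π.space), ‖S (π.op s (S.symm ξ))‖ = ‖ξ‖

theorem propertyT_all_of_unitarisable {G : Type u} [Group G] [TopologicalSpace G]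
    [IsTopologicalGroup G] [LocallyCompactSpace G] (hU : Unitarisable.{u, v} G)
    (hT : HasPropertyT.{u, v} G 1) : ∀ c : ℝ, 1 ≤ c → HasPropertyT.{u, v} G c := by
  intro c _hc π hπRc hπai
  obtain ⟨hUB, hSOT⟩ := hπRc
  obtain ⟨S, hS⟩ := hU π hSOT ⟨c, hUB⟩
  set u : (π.space →L[ℂ] π.space)ˣ :=
    ⟨(S : π.space →L[ℂ] π.space), (S.symm : π.space →L[ℂ] π.space),
      by ext x; simp, by ext x; simp⟩ with hu
  set π' : HilbRep G :=
    { space := π.space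
      toFun := ((MulAut.conj u).toMonoidHom).comp π.toFun } with hπ'
  have hop : ∀ (s : G) (ξ : π.space), π'.op s ξ = S (π.op s (S.symm ξ)) := by
    intro s ξ
    show (((MulAut.conj u) (π.toFun s) : (π.space →L[ℂ] π.space)ˣ) : π.space →L[ℂ] π.space) ξ = _
    simp [hπ', HilbRep.op, hu, Units.val_mul]
  have hop1 : π'.IsUB 1 := by
    intro s
    apply ContinuousLinearMap.opNorm_le_bound _ zero_le_one
    intro ξ
    rw [hop s ξ, hS s ξ, one_mul]
  have hopSOT : π'.IsSOTContinuous := by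
    intro ξ
    have : Continuous fun s : G => π.op s (S.symm ξ) := hSOT (S.symm ξ)
    have h2 : Continuous fun s : G => S (π.op s (S.symm ξ)) := S.continuous.comp this
    convert h2 using 2 with s
    try exact hop s ξ
  set a := ‖(S : π.space →L[ℂ] π.space)‖ with ha
  set b := ‖(S.symm : π.space →L[ℂ] π.space)‖ with hb
  have ha0 : 0 ≤ a := norm_nonneg _
  have hb0 : 0 ≤ b := norm_nonneg _
  have hπ'ai : π'.AlmostInvariantVectors := by
    intro Q hQ ε hε
    set ε' : ℝ := ε / (2 * (a * b + 1)) with hε'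
    have hden : 0 < 2 * (a * b + 1) := by positivity
    have hε'0 : 0 < ε' := div_pos hε hden
    obtain ⟨ξ, hξ⟩ := hπai (Q ∪ {1}) (hQ.union isCompact_singleton) ε' hε'0
    have h1 : ‖π.op 1 ξ - ξ‖ < ε' * ‖ξ‖ := hξ 1 (by simp)
    have hξnorm : 0 < ‖ξ‖ := by
      by_contra h
      push_neg at h
      have : ξ = 0 := by
        have := le_antisymm h (norm_nonneg ξ)
        exact norm_eq_zero.mp this
      rw [this] at h1
      simp [HilbRep.op] at h1
    refine ⟨S ξ, ?_⟩
    intro s hs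
    have hSξ : 0 < ‖S ξ‖ := by
      rw [norm_pos_iff]
      intro h
      exact (norm_pos_iff.mp hξnorm) (by simpa using congrArg S.symm h)
    have key : π'.op s (S ξ) - S ξ = S (π.op s ξ - ξ) := by
      rw [hop s (S ξ), S.symm_apply_apply, map_sub]
    rw [key]
    have h2 : ‖S (π.op s ξ - ξ)‖ ≤ a * ‖π.op s ξ - ξ‖ :=
      (S : π.space →L[ℂ] π.space).le_opNorm _
    have h3 : ‖π.op s ξ - ξ‖ ≤ ε' * ‖ξ‖ := le_of_lt (hξ s (Or.inl hs))
    have h4 : ‖ξ‖ ≤ b * ‖S ξ‖ := by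
      have := (S.symm : π.space →L[ℂ] π.space).le_opNorm (S ξ)
      simpa using this
    have h5 : ‖S (π.op s ξ - ξ)‖ ≤ a * (ε' * (b * ‖S ξ‖)) := by
      calc ‖S (π.op s ξ - ξ)‖ ≤ a * ‖π.op s ξ - ξ‖ := h2
        _ ≤ a * (ε' * ‖ξ‖) := by gcongr
        _ ≤ a * (ε' * (b * ‖S ξ‖)) := by gcongr
    have h6 : a * (ε' * (b * ‖S ξ‖)) < ε * ‖S ξ‖ := by
      have hab : a * b * ε' ≤ ε / 2 := by
        rw [hε', ← mul_div_assoc, div_le_div_iff₀ hden (by norm_num : (0:ℝ) < 2)]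
        nlinarith
      nlinarith
    linarith
  obtain ⟨η, hη0, hηinv⟩ := hT π' ⟨hop1, hopSOT⟩ hπ'ai
  refine ⟨S.symm η, ?_, ?_⟩
  · intro h
    exact hη0 (by simpa using congrArg S h)
  · intro s
    have := hηinv s
    rw [hop s η] at this
    have h2 : S (π.op s (S.symm η)) = S (S.symm η) := by rw [this, S.apply_symm_apply]
    exact S.injective h2
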